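/- Let x₁* and x₂* be optimal solutions of the undirected LP min{cᵀx : Af = b, |f| ≤ x} and let f, g be feasible with |f| = x₁* and |g| = x₂*. Then there is no index e such that f_e·g_e < 0 and c_e > 0. -/

import Mathlib

/-- Two optimal solutions of the undirected LP cannot carry opposite signs on a
coordinate of positive cost. -/
theorem no_sign_conflict {n m : ℕ} (A : Matrix (Fin n) (Fin m) ℝ)
    (b : Fin n → ℝ) (c : Fin m → ℝ) (hc : 0 ≤ c)
    (x₁ x₂ f g : Fin m → ℝ)
    (hf : A.mulVec f = b) (hg : A.mulVec g = b)
    (hfx : ∀ e, |f e| = x₁ e) (hgx : ∀ e, |g e| = x₂ e)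
    (hopt₁ : ∀ x' : Fin m → ℝ,
      (∃ f' : Fin m → ℝ, A.mulVec f' = b ∧ ∀ e, |f' e| ≤ x' e) →
      ∑ e, c e * x₁ e ≤ ∑ e, c e * x' e)
    (hopt₂ : ∀ x' : Fin m → ℝ,
      (∃ f' : Fin m → ℝ, A.mulVec f' = b ∧ ∀ e, |f' e| ≤ x' e) →
      ∑ e, c e * x₂ e ≤ ∑ e, c e * x' e) :
    ¬ ∃ e, f e * g e < 0 ∧ 0 < c e := by
  rintro ⟨e, hfg, hce⟩
  have hcase := mul_neg_iff.mp hfg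
  have hne : g e - f e ≠ 0 := by
    rcases hcase with ⟨h1, h2⟩ | ⟨h1, h2⟩ <;> intro h <;> nlinarith
  set t : ℝ := g e / (g e - f e) with ht
  have ht0 : 0 < t := by
    rcases hcase with ⟨h1, h2⟩ | ⟨h1, h2⟩
    · exact div_pos_of_neg_of_neg h2 (by linarith)
    · exact div_pos h2 (by linarith)
  have ht1 : t < 1 := by
    have heq : t - 1 = f e / (g e - f e) := by
      field_simp [ht]
      rw [ht, sub_mul, div_mul_cancel₀ _ hne]
      ring
    have : t - 1 < 0 := by
      rw [heq]
      rcases hcase with ⟨h1, h2⟩ | ⟨h1, h2⟩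
      · exact div_neg_of_pos_of_neg h1 (by linarith)
      · exact div_neg_of_neg_of_pos h1 (by linarith)
    linarith
  set h : Fin m → ℝ := t • f + (1 - t) • g with hh
  have hAh : A.mulVec h = b := by
    rw [hh, Matrix.mulVec_add, Matrix.mulVec_smul, Matrix.mulVec_smul, hf, hg]
    funext i
    simp [smul_eq_mul]
    ring
  have he0 : h e = 0 := by
    simp only [hh, Pi.add_apply, Pi.smul_apply, smul_eq_mul, ht]
    field_simp
    ring
  have hfe : f e ≠ 0 := by rcases hcase with ⟨h1, _⟩ | ⟨h1, _⟩ <;> intro hz <;> linarith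
  have hx1e : 0 < x₁ e := by rw [← hfx e]; exact abs_pos.mpr hfe
  have hge : g e ≠ 0 := by rcases hcase with ⟨_, h2⟩ | ⟨_, h2⟩ <;> intro hz <;> linarith
  have hx2e : 0 < x₂ e := by rw [← hgx e]; exact abs_pos.mpr hge
  -- costs of the two optima are equal
  have hV : ∑ i, c i * x₁ i = ∑ i, c i * x₂ i := by
    have h1 := hopt₁ x₂ ⟨g, hg, fun i => (hgx i).le⟩
    have h2 := hopt₂ x₁ ⟨f, hf, fun i => (hfx i).le⟩
    linarith
  -- cost of |h| is strictly less
  have hbound : ∀ i, c i * |h i| ≤ c i * (t * x₁ i + (1 - t) * x₂ i) := by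
    intro i
    apply mul_le_mul_of_nonneg_left _ (hc i)
    calc |h i| ≤ |t * f i| + |(1 - t) * g i| := by
          simpa [hh] using abs_add_le (t * f i) ((1 - t) * g i)
      _ = t * x₁ i + (1 - t) * x₂ i := by
          rw [abs_mul, abs_mul, abs_of_pos ht0, abs_of_pos (by linarith : (0:ℝ) < 1 - t),
            hfx i, hgx i]
  have hstrict : ∑ i, c i * |h i| < ∑ i, c i * (t * x₁ i + (1 - t) * x₂ i) := by
    apply Finset.sum_lt_sum (fun i _ => hbound i)
    refine ⟨e, Finset.mem_univ e, ?_⟩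
    rw [he0, abs_zero, mul_zero]
    have : 0 < t * x₁ e + (1 - t) * x₂ e := by nlinarith
    positivity
  have hsum : ∑ i, c i * (t * x₁ i + (1 - t) * x₂ i)
      = t * (∑ i, c i * x₁ i) + (1 - t) * (∑ i, c i * x₂ i) := by
    rw [Finset.mul_sum, Finset.mul_sum, ← Finset.sum_add_distrib]
    exact Finset.sum_congr rfl fun i _ => by ring
  have hlt : ∑ i, c i * |h i| < ∑ i, c i * x₁ i := by
    rw [hsum, ← hV] at hstrict
    linarith [hstrict]
  have := hopt₁ (fun i => |h i|) ⟨h, hAh, fun i => le_refl _⟩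
  linarith
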